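/- Let F and G be propositional clausal formulas with no common clause such that F ∧ G is unsatisfiable, and let M₀ be the root of a deduction tree for F ∧ G. Then Huang's partial interpolant pi(M₀) associated with M₀ is a Craig interpolant of F and ¬G, i.e., F ⊨ pi(M₀) ⊨ ¬G and every atom of pi(M₀) occurs in both F and G. -/

import Mathlib

open Classical

namespace CTIFProp

/-- A propositional literal: polarity and atom (atoms are nullary predicates). -/
abbrev PLit := Bool × ℕ

/-- A propositional clause: a disjunction of literals (as a list). -/
abbrev PClause := List PLit

/-- A propositional clausal formula: a conjunction of clauses. -/
abbrev PCF := List PClause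

def PLit.compl (L : PLit) : PLit := (!L.1, L.2)

/-- Propositional formulas. -/
inductive PFml : Type where
  | tru : PFml
  | fls : PFml
  | atom : ℕ → PFml
  | neg : PFml → PFml
  | conj : PFml → PFml → PFml
  | disj : PFml → PFml → PFml
  deriving DecidableEq

def PLit.toFml (L : PLit) : PFml := if L.1 then .atom L.2 else .neg (.atom L.2)

def PFml.sat (v : ℕ → Prop) : PFml → Prop
  | .tru => True
  | .fls => False
  | .atom a => v a
  | .neg F => ¬ F.sat v
  | .conj F G => F.sat v ∧ G.sat v
  | .disj F G => F.sat v ∨ G.sat v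

def PFml.atoms : PFml → Set ℕ
  | .tru => ∅
  | .fls => ∅
  | .atom a => {a}
  | .neg F => F.atoms
  | .conj F G => F.atoms ∪ G.atoms
  | .disj F G => F.atoms ∪ G.atoms

def PLit.sat (v : ℕ → Prop) (L : PLit) : Prop := if L.1 then v L.2 else ¬ v L.2

def PClause.sat (v : ℕ → Prop) (C : PClause) : Prop := ∃ L ∈ C, PLit.sat v L

def PCF.sat (v : ℕ → Prop) (F : PCF) : Prop := ∀ C ∈ F, PClause.sat v C

/-- The atom `A` occurs in the clausal formula `F`. -/
def occB (A : ℕ) (F : PCF) : Bool := F.any (fun C => C.any (fun L => L.2 == A))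

/-- `A` is F-colored w.r.t. `F`, `G`: it occurs in `F` but not in `G`. -/
def fColored (A : ℕ) (F G : PCF) : Bool := occB A F && !occB A G

def bigDisj : List PFml → PFml
  | [] => .fls
  | [H] => H
  | H :: Hs => .disj H (bigDisj Hs)

def bigConj : List PFml → PFml
  | [] => .tru
  | [H] => H
  | H :: Hs => .conj H (bigConj Hs)

/-- Resolution deduction trees: leaves hold input clauses, inner nodes resolve
their children's clauses upon an atom. -/
inductive DT : Type where
  | leaf : PClause → DT
  | res : ℕ → DT → DT → DT

/-- The clause labeling a deduction-tree node; for a resolution step upon `A`,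
the binary resolvent with merging of duplicate literals. -/
def DT.clause : DT → PClause
  | .leaf C => C
  | .res A t₁ t₂ =>
      ((t₁.clause.filter (fun L => L ≠ (true, A))) ++
       (t₂.clause.filter (fun L => L ≠ (false, A)))).dedup

/-- Well-formedness of a deduction tree for the clausal formula `FG`: every leaf
clause is in `FG` and every resolution step resolves upon `A` occurring positively
in the first and negatively in the second child's clause. -/
def DT.wf (FG : PCF) : DT → Prop
  | .leaf C => C ∈ FG
  | .res A t₁ t₂ => (true, A) ∈ t₁.clause ∧ (false, A) ∈ t₂.clause ∧ t₁.wf FG ∧ t₂.wf FG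

/-- Huang's partial interpolant associated with the nodes of a deduction tree
for F ∧ G. -/
def DT.pi (F G : PCF) : DT → PFml
  | .leaf C => if C ∈ F then .fls else .tru
  | .res A t₁ t₂ =>
      if fColored A F G then .disj (t₁.pi F G) (t₂.pi F G)
      else if fColored A G F then .conj (t₁.pi F G) (t₂.pi F G)
      else .disj (.conj (t₁.pi F G) (.neg (.atom A))) (.conj (.atom A) (t₂.pi F G))

/-- McMillan's partial interpolant associated with the nodes of a deduction tree
for F ∧ G. -/
def DT.mm (F G : PCF) : DT → PFml
  | .leaf C =>
      if C ∈ F then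
        bigDisj ((C.filter (fun L => occB L.2 F && occB L.2 G)).map PLit.toFml)
      else .tru
  | .res A t₁ t₂ =>
      if fColored A F G then .disj (t₁.mm F G) (t₂.mm F G)
      else .conj (t₁.mm F G) (t₂.mm F G)

def DT.size : DT → ℕ
  | .leaf _ => 1
  | .res _ t₁ t₂ => t₁.size + t₂.size + 1

def DT.innerCount : DT → ℕ
  | .leaf _ => 0
  | .res _ t₁ t₂ => t₁.innerCount + t₂.innerCount + 1

/-- The non-root part of a two-sided (propositional) clausal tableau. -/
inductive PTab : Type where
  | node : PLit → Bool → List PTab → PTab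

def PTab.lit : PTab → PLit
  | .node L _ _ => L

def PTab.side : PTab → Bool
  | .node _ s _ => s

/-- Well-formedness of a subtree of a two-sided clausal tableau for the propositional
clausal formulas `F` and `G`: siblings share their side; the clause formed by the
children's literals is a clause of `F` (side true) resp. `G` (side false). -/
inductive PTab.isFor (F G : PCF) : PTab → Prop where
  | mk : ∀ (L : PLit) (s : Bool) (cs : List PTab) (s' : Bool),
      (∀ t ∈ cs, PTab.side t = s') →
      (cs ≠ [] → (cs.map PTab.lit) ∈ (if s' then F else G)) →
      (∀ t ∈ cs, PTab.isFor F G t) →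
      PTab.isFor F G (.node L s cs)

/-- All leaves of the subtree are closing. -/
inductive PTab.leafClosed : List PLit → PTab → Prop where
  | leaf : ∀ (anc : List PLit) (L : PLit) (s : Bool),
      PLit.compl L ∈ anc → PTab.leafClosed anc (.node L s [])
  | inner : ∀ (anc : List PLit) (L : PLit) (s : Bool) (cs : List PTab),
      cs ≠ [] → (∀ t ∈ cs, PTab.leafClosed (L :: anc) t) →
      PTab.leafClosed anc (.node L s cs)

/-- The function ipol on two-sided leaf-closed clausal tableaux, as a relation
(a closing leaf may have several possible targets). -/
inductive Ipol : List (PLit × Bool) → PTab → PFml → Prop where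
  | leafFF : ∀ (anc : List (PLit × Bool)) (L : PLit),
      (PLit.compl L, true) ∈ anc → Ipol anc (.node L true []) .fls
  | leafFG : ∀ (anc : List (PLit × Bool)) (L : PLit),
      (PLit.compl L, false) ∈ anc → Ipol anc (.node L true []) (PLit.toFml L)
  | leafGF : ∀ (anc : List (PLit × Bool)) (L : PLit),
      (PLit.compl L, true) ∈ anc → Ipol anc (.node L false []) (PLit.toFml (PLit.compl L))
  | leafGG : ∀ (anc : List (PLit × Bool)) (L : PLit),
      (PLit.compl L, false) ∈ anc → Ipol anc (.node L false []) .tru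
  | innerF : ∀ (anc : List (PLit × Bool)) (L : PLit) (s : Bool) (cs : List PTab) (Hs : List PFml),
      cs ≠ [] → (∀ t ∈ cs, PTab.side t = true) →
      ∀ (hlen : cs.length = Hs.length),
      (∀ i : Fin cs.length, Ipol ((L, s) :: anc) (cs.get i) (Hs.get (Fin.cast hlen i))) →
      Ipol anc (.node L s cs) (bigDisj Hs)
  | innerG : ∀ (anc : List (PLit × Bool)) (L : PLit) (s : Bool) (cs : List PTab) (Hs : List PFml),
      cs ≠ [] → (∀ t ∈ cs, PTab.side t = false) →
      ∀ (hlen : cs.length = Hs.length),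
      (∀ i : Fin cs.length, Ipol ((L, s) :: anc) (cs.get i) (Hs.get (Fin.cast hlen i))) →
      Ipol anc (.node L s cs) (bigConj Hs)

/-- The value of ipol at the (unlabeled) root. -/
inductive IpolRoot : List PTab → PFml → Prop where
  | rootF : ∀ (cs : List PTab) (Hs : List PFml),
      cs ≠ [] → (∀ t ∈ cs, PTab.side t = true) →
      ∀ (hlen : cs.length = Hs.length),
      (∀ i : Fin cs.length, Ipol [] (cs.get i) (Hs.get (Fin.cast hlen i))) →
      IpolRoot cs (bigDisj Hs)
  | rootG : ∀ (cs : List PTab) (Hs : List PFml),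
      cs ≠ [] → (∀ t ∈ cs, PTab.side t = false) →
      ∀ (hlen : cs.length = Hs.length),
      (∀ i : Fin cs.length, Ipol [] (cs.get i) (Hs.get (Fin.cast hlen i))) →
      IpolRoot cs (bigConj Hs)

/-- A two-sided clausal tableau, given by the children of the (unlabeled) root. -/
structure PTableau : Type where
  children : List PTab

def PTableau.isFor (F G : PCF) (T : PTableau) : Prop :=
  (∃ s' : Bool, (∀ t ∈ T.children, PTab.side t = s') ∧
    (T.children ≠ [] → (T.children.map PTab.lit) ∈ (if s' then F else G))) ∧
  ∀ t ∈ T.children, PTab.isFor F G t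

def PTableau.leafClosed (T : PTableau) : Prop :=
  T.children ≠ [] ∧ ∀ t ∈ T.children, PTab.leafClosed [] t

mutual
  def PTab.size : PTab → ℕ
    | .node _ _ cs => 1 + PTab.sizeList cs
  def PTab.sizeList : List PTab → ℕ
    | [] => 0
    | t :: ts => PTab.size t + PTab.sizeList ts
end

def PTableau.size (T : PTableau) : ℕ := 1 + PTab.sizeList T.children

/-- The clausal formula CUTS_F: the clauses ¬A ∨ A for all atoms A occurring in F. -/
def cuts (F : PCF) : PCF :=
  ((F.flatMap (fun C => C.map Prod.snd)).dedup).map (fun A => [(false, A), (true, A)])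

/-- `C` is an atomic-cut clause ¬A ∨ A. -/
def isCutClause : PClause → Bool
  | [(b₁, A₁), (b₂, A₂)] => !b₁ && b₂ && (A₁ == A₂)
  | _ => false

mutual
  /-- Number of tableau clauses (children groups) that are atomic cuts. -/
  def PTab.cutCount : PTab → ℕ
    | .node _ _ cs =>
        (if isCutClause (cs.map PTab.lit) then 1 else 0) + PTab.cutCountList cs
  def PTab.cutCountList : List PTab → ℕ
    | [] => 0
    | t :: ts => PTab.cutCount t + PTab.cutCountList ts
end

def PTableau.cutCount (T : PTableau) : ℕ :=
  (if isCutClause (T.children.map PTab.lit) then 1 else 0) + PTab.cutCountList T.children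

/-- Every atomic-cut clause of the subtree whose atom is F-colored has side F and
every atomic-cut clause upon a G-colored or transparent atom has side G. -/
inductive PTab.cutSidesOk (F G : PCF) : PTab → Prop where
  | mk : ∀ (L : PLit) (s : Bool) (cs : List PTab),
      (∀ A : ℕ, cs.map PTab.lit = [(false, A), (true, A)] →
        ∀ t ∈ cs, PTab.side t = fColored A F G) →
      (∀ t ∈ cs, PTab.cutSidesOk F G t) →
      PTab.cutSidesOk F G (.node L s cs)

def PTableau.cutSidesOk (F G : PCF) (T : PTableau) : Prop :=
  (∀ A : ℕ, T.children.map PTab.lit = [(false, A), (true, A)] →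
    ∀ t ∈ T.children, PTab.side t = fColored A F G) ∧
  ∀ t ∈ T.children, PTab.cutSidesOk F G t

end CTIFProp
namespace CTIFProp

lemma occB_iff {A : ℕ} {F : PCF} : occB A F = true ↔ ∃ C ∈ F, ∃ L ∈ C, L.2 = A := by
  simp [occB, List.any_eq_true]

lemma occB_append {A : ℕ} {F G : PCF} : occB A (F ++ G) = (occB A F || occB A G) := by
  simp [occB]

lemma mem_res_clause {L : PLit} {A : ℕ} {t₁ t₂ : DT} :
    L ∈ (DT.res A t₁ t₂).clause ↔
      (L ∈ t₁.clause ∧ L ≠ (true, A)) ∨ (L ∈ t₂.clause ∧ L ≠ (false, A)) := by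
  simp [DT.clause, List.mem_dedup, List.mem_filter, List.mem_append]

lemma clause_occ {FG : PCF} : ∀ t : DT, t.wf FG → ∀ L ∈ t.clause, occB L.2 FG = true := by
  intro t
  induction t with
  | leaf C => exact fun h L hL => occB_iff.mpr ⟨C, h, L, hL, rfl⟩
  | res A t₁ t₂ ih₁ ih₂ =>
    intro h L hL
    rcases mem_res_clause.mp hL with ⟨h1, _⟩ | ⟨h2, _⟩
    · exact ih₁ h.2.2.1 L h1
    · exact ih₂ h.2.2.2 L h2

lemma huang_main (F G : PCF) : ∀ t : DT, t.wf (F ++ G) →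
    (∀ v, PCF.sat v F → (t.pi F G).sat v ∨ ∃ L ∈ t.clause, occB L.2 F = true ∧ PLit.sat v L) ∧
    (∀ v, PCF.sat v G → ¬ (t.pi F G).sat v ∨ ∃ L ∈ t.clause, occB L.2 G = true ∧ PLit.sat v L) ∧
    (t.pi F G).atoms ⊆ {A | occB A F = true} ∩ {A | occB A G = true} := by
  intro t
  induction t with
  | leaf C =>
    intro hwf
    by_cases hCF : C ∈ F
    · refine ⟨?_, ?_, ?_⟩
      · intro v hv
        right
        obtain ⟨L, hL, hs⟩ := hv C hCF
        exact ⟨L, hL, occB_iff.mpr ⟨C, hCF, L, hL, rfl⟩, hs⟩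
      · intro v _; left; simp [DT.pi, hCF, PFml.sat]
      · simp [DT.pi, hCF, PFml.atoms]
    · have hCG : C ∈ G := by
        rcases List.mem_append.mp hwf with h | h
        · exact absurd h hCF
        · exact h
      refine ⟨?_, ?_, ?_⟩
      · intro v _; left; simp [DT.pi, hCF, PFml.sat]
      · intro v hv
        right
        obtain ⟨L, hL, hs⟩ := hv C hCG
        exact ⟨L, hL, occB_iff.mpr ⟨C, hCG, L, hL, rfl⟩, hs⟩
      · simp [DT.pi, hCF, PFml.atoms]
  | res A t₁ t₂ ih₁ ih₂ =>
    intro hwf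
    obtain ⟨hA1, hA2, hw1, hw2⟩ := hwf
    obtain ⟨ihA1, ihB1, ihC1⟩ := ih₁ hw1
    obtain ⟨ihA2, ihB2, ihC2⟩ := ih₂ hw2
    by_cases hF : fColored A F G = true
    · have hcol : occB A F = true ∧ occB A G = false := by
        simpa [fColored, Bool.and_eq_true, Bool.not_eq_true'] using hF
      refine ⟨?_, ?_, ?_⟩
      · intro v hv
        rcases ihA1 v hv with h | ⟨L, hL, hoF, hs⟩
        · left; simp only [DT.pi, hF, if_pos, PFml.sat]; exact Or.inl h
        · by_cases hLA : L = (true, A)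
          · rcases ihA2 v hv with h | ⟨L', hL', hoF', hs'⟩
            · left; simp only [DT.pi, hF, if_pos, PFml.sat]; exact Or.inr h
            · right
              refine ⟨L', mem_res_clause.mpr (Or.inr ⟨hL', ?_⟩), hoF', hs'⟩
              rintro rfl
              subst hLA
              simp [PLit.sat] at hs hs'
              exact hs' hs
          · exact Or.inr ⟨L, mem_res_clause.mpr (Or.inl ⟨hL, hLA⟩), hoF, hs⟩
      · intro v hv
        rcases ihB1 v hv with h1 | ⟨L, hL, hoG, hs⟩
        · rcases ihB2 v hv with h2 | ⟨L, hL, hoG, hs⟩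
          · left; simp only [DT.pi, hF, if_pos, PFml.sat, not_or]; exact ⟨h1, h2⟩
          · refine Or.inr ⟨L, mem_res_clause.mpr (Or.inr ⟨hL, ?_⟩), hoG, hs⟩
            rintro rfl
            rw [hcol.2] at hoG; exact Bool.false_ne_true hoG
        · refine Or.inr ⟨L, mem_res_clause.mpr (Or.inl ⟨hL, ?_⟩), hoG, hs⟩
          rintro rfl
          rw [hcol.2] at hoG; exact Bool.false_ne_true hoG
      · simp only [DT.pi, hF, if_pos, PFml.atoms]
        exact Set.union_subset ihC1 ihC2
    · by_cases hG : fColored A G F = true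
      · have hcol : occB A G = true ∧ occB A F = false := by
          simpa [fColored, Bool.and_eq_true, Bool.not_eq_true'] using hG
        refine ⟨?_, ?_, ?_⟩
        · intro v hv
          rcases ihA1 v hv with h1 | ⟨L, hL, hoF, hs⟩
          · rcases ihA2 v hv with h2 | ⟨L, hL, hoF, hs⟩
            · left; simp only [DT.pi, hF, hG, if_neg, if_pos, PFml.sat]; exact ⟨h1, h2⟩
            · refine Or.inr ⟨L, mem_res_clause.mpr (Or.inr ⟨hL, ?_⟩), hoF, hs⟩
              rintro rfl
              rw [hcol.2] at hoF; exact Bool.false_ne_true hoF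
          · refine Or.inr ⟨L, mem_res_clause.mpr (Or.inl ⟨hL, ?_⟩), hoF, hs⟩
            rintro rfl
            rw [hcol.2] at hoF; exact Bool.false_ne_true hoF
        · intro v hv
          rcases ihB1 v hv with h | ⟨L, hL, hoG, hs⟩
          · left; simp only [DT.pi, hF, hG, if_neg, if_pos, PFml.sat]
            rintro ⟨h1, _⟩; exact h h1
          · by_cases hLA : L = (true, A)
            · rcases ihB2 v hv with h | ⟨L', hL', hoG', hs'⟩
              · left; simp only [DT.pi, hF, hG, if_neg, if_pos, PFml.sat]
                rintro ⟨_, h2⟩; exact h h2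
              · right
                refine ⟨L', mem_res_clause.mpr (Or.inr ⟨hL', ?_⟩), hoG', hs'⟩
                rintro rfl
                subst hLA
                simp [PLit.sat] at hs hs'
                exact hs' hs
            · exact Or.inr ⟨L, mem_res_clause.mpr (Or.inl ⟨hL, hLA⟩), hoG, hs⟩
        · simp only [DT.pi, hF, hG, if_neg, if_pos, PFml.atoms]
          exact Set.union_subset ihC1 ihC2
      · have hboth : occB A F = true ∧ occB A G = true := by
          have h1 := clause_occ t₁ hw1 (true, A) hA1
          rw [occB_append] at h1
          rcases Bool.or_eq_true_iff.mp h1 with hf | hg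
          · refine ⟨hf, ?_⟩
            by_contra hg
            exact hF (by simp [fColored, hf, Bool.not_eq_true] at hg ⊢; simp [hg])
          · refine ⟨?_, hg⟩
            by_contra hf
            exact hG (by simp [fColored, hg, Bool.not_eq_true] at hf ⊢; simp [hf])
        refine ⟨?_, ?_, ?_⟩
        · intro v hv
          by_cases hvA : v A
          · rcases ihA2 v hv with h | ⟨L, hL, hoF, hs⟩
            · left; simp only [DT.pi, hF, hG, if_neg, PFml.sat]
              exact Or.inr ⟨hvA, h⟩
            · refine Or.inr ⟨L, mem_res_clause.mpr (Or.inr ⟨hL, ?_⟩), hoF, hs⟩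
              rintro rfl
              simp [PLit.sat] at hs
              exact hs hvA
          · rcases ihA1 v hv with h | ⟨L, hL, hoF, hs⟩
            · left; simp only [DT.pi, hF, hG, if_neg, PFml.sat]
              exact Or.inl ⟨h, hvA⟩
            · refine Or.inr ⟨L, mem_res_clause.mpr (Or.inl ⟨hL, ?_⟩), hoF, hs⟩
              rintro rfl
              simp [PLit.sat] at hs
              exact hvA hs
        · intro v hv
          by_cases hvA : v A
          · rcases ihB2 v hv with h | ⟨L, hL, hoG, hs⟩
            · left; simp only [DT.pi, hF, hG, if_neg, Bool.false_eq_true, if_false, PFml.sat, not_or]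
              exact ⟨fun h12 => h12.2 hvA, fun h12 => h h12.2⟩
            · refine Or.inr ⟨L, mem_res_clause.mpr (Or.inr ⟨hL, ?_⟩), hoG, hs⟩
              rintro rfl
              simp [PLit.sat] at hs
              exact hs hvA
          · rcases ihB1 v hv with h | ⟨L, hL, hoG, hs⟩
            · left; simp only [DT.pi, hF, hG, if_neg, Bool.false_eq_true, if_false, PFml.sat, not_or]
              exact ⟨fun h12 => h h12.1, fun h12 => hvA h12.1⟩
            · refine Or.inr ⟨L, mem_res_clause.mpr (Or.inl ⟨hL, ?_⟩), hoG, hs⟩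
              rintro rfl
              simp [PLit.sat] at hs
              exact hvA hs
        · simp only [DT.pi, hF, hG, if_neg, PFml.atoms]
          intro x hx
          rcases hx with (hx | hx) | (hx | hx)
          · exact ihC1 hx
          · simp only [PFml.atoms, Set.mem_singleton_iff] at hx
            subst hx; exact ⟨hboth.1, hboth.2⟩
          · simp only [PFml.atoms, Set.mem_singleton_iff] at hx
            subst hx; exact ⟨hboth.1, hboth.2⟩
          · exact ihC2 hx

/-- Correctness of Huang's partial interpolants. If `F` and `G` are
propositional clausal formulas with no common clause such that F ∧ G is unsatisfiable
and `t` is a deduction tree for F ∧ G (with root clause □), then pi(root) is a Craig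
interpolant of F and ¬G: F ⊨ pi ⊨ ¬G and every atom of pi occurs in both F and G. -/
theorem statement3 (F G : PCF)
    (hnodup : ∀ C ∈ F ++ G, C.Nodup)
    (hnocommon : ∀ C : PClause, ¬ (C ∈ F ∧ C ∈ G))
    (hunsat : ∀ v : ℕ → Prop, ¬ (PCF.sat v F ∧ PCF.sat v G))
    (t : DT) (hwf : t.wf (F ++ G)) (hroot : t.clause = []) :
    (∀ v : ℕ → Prop, PCF.sat v F → (t.pi F G).sat v) ∧
    (∀ v : ℕ → Prop, (t.pi F G).sat v → ¬ PCF.sat v G) ∧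
    (t.pi F G).atoms ⊆ {A | occB A F = true} ∩ {A | occB A G = true} := by
  obtain ⟨hA, hB, hC⟩ := huang_main F G t hwf
  refine ⟨fun v hv => ?_, fun v hp hvG => ?_, hC⟩
  · rcases hA v hv with h | ⟨L, hL, _⟩
    · exact h
    · rw [hroot] at hL; simp at hL
  · rcases hB v hvG with h | ⟨L, hL, _⟩
    · exact h hp
    · rw [hroot] at hL; simp at hL

end CTIFProp
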